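/- For every integer q ≥ 3 and every integer n ≥ 3, the set CBFS_q(n) is non-expandable on BF_q(n): for every bifix-free word w ∈ BF_q(n) \ CBFS_q(n) there exists a word w' ∈ CBFS_q(n) such that some nonempty proper prefix of w is a suffix of w' or some nonempty proper prefix of w' is a suffix of w. -/

import Mathlib

/-- Value of a letter: 1 ↦ +1, 0 ↦ -1, other letters ↦ 0. -/
def mval (a : ℕ) : ℤ := if a = 1 then 1 else if a = 0 then -1 else 0

/-- Value-sum of a word. -/
def vsum (w : List ℕ) : ℤ := (w.map mval).sum

/-- A (q-2)-colored Motzkin word over the alphabet Z_q = {0,...,q-1}: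
all letters < q, every prefix has nonnegative value-sum, total value-sum 0. -/
def IsMotzkinWord (q : ℕ) (w : List ℕ) : Prop :=
  (∀ a ∈ w, a < q) ∧ (∀ u, u <+: w → 0 ≤ vsum u) ∧ vsum w = 0

/-- The set 𝓜_{q-2}(n) of (q-2)-colored Motzkin words of length n. -/
def MotzkinSet (q n : ℕ) : Set (List ℕ) := {w | w.length = n ∧ IsMotzkinWord q w}

/-- M_{q-2}(n), the number of (q-2)-colored Motzkin words of length n. -/
noncomputable def Mnum (q n : ℕ) : ℕ := (MotzkinSet q n).ncard

/-- The set Ê_{q-2}(n) of elevated (q-2)-colored Motzkin words of length n: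
words 1α0 with α ∈ 𝓜_{q-2}(n-2). -/
def ElevatedSet (q n : ℕ) : Set (List ℕ) :=
  {w | w.length = n ∧ ∃ α ∈ MotzkinSet q (n - 2), w = 1 :: (α ++ [0])}

/-- The set A_q(n). -/
def SetA (q n : ℕ) : Set (List ℕ) :=
  {w | ∃ i ≤ n / 2, ∃ α ∈ MotzkinSet q i, ∃ β ∈ ElevatedSet q (n - i), w = α ++ β} \
    {w | ∃ α ∈ ElevatedSet q (n / 2), ∃ β ∈ ElevatedSet q (n / 2), w = α ++ β}

/-- The set B_q(n). -/
def SetB (q n : ℕ) : Set (List ℕ) :=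
  {w | ∃ i ≤ n / 2 - 1, ∃ α ∈ MotzkinSet q i, ∃ β ∈ ElevatedSet q (n - i - 1),
    w = 1 :: (α ++ β)}

/-- The set C_q(n): words γ0 with γ a (q-2)-colored Motzkin word of length n-1
having no factor which is an elevated Motzkin word of length j ≥ ⌈n/2⌉. -/
def SetC (q n : ℕ) : Set (List ℕ) :=
  {w | ∃ γ ∈ MotzkinSet q (n - 1),
    (∀ j, (n + 1) / 2 ≤ j → ∀ β ∈ ElevatedSet q j, ¬ β <:+: γ) ∧ w = γ ++ [0]}

/-- The cross-bifix-free candidate set CBFS_q(n). -/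
def CBFS (q n : ℕ) : Set (List ℕ) := SetA q n ∪ SetB q n ∪ SetC q n

/-- A word is bifix-free if no nonempty proper prefix of it is also a suffix of it. -/
def BifixFree (w : List ℕ) : Prop :=
  ∀ u, u <+: w → u ≠ [] → u.length < w.length → ¬ u <:+ w

/-- BF_q(n): the set of bifix-free words of length n over Z_q. -/
def BF (q n : ℕ) : Set (List ℕ) := {w | w.length = n ∧ (∀ a ∈ w, a < q) ∧ BifixFree w}

/-- F_{k,q}(n): the number of words of length n over Z_q avoiding k consecutive 0's. -/
noncomputable def Fcount (k q n : ℕ) : ℕ :=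
  {w : List ℕ | w.length = n ∧ (∀ a ∈ w, a < q) ∧ ¬ List.replicate k 0 <:+: w}.ncard

/-- The set S_{k,q}(n) of Bajic--Stojanovic--Chee--Kiah type words: words s of length n
over Z_q with s₁ = ⋯ = s_k = 0, s_{k+1} ≠ 0, s_n ≠ 0, and such that the subword
s_{k+2} ⋯ s_{n-1} contains no k consecutive 0's. -/
def SetS (q k n : ℕ) : Set (List ℕ) :=
  {s | s.length = n ∧ (∀ a ∈ s, a < q) ∧ s.take k = List.replicate k 0 ∧
    s.getD k 0 ≠ 0 ∧ s.getLast? ≠ some 0 ∧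
    ¬ List.replicate k 0 <:+: (s.drop (k + 1)).take (n - k - 2)}


section Helpers

lemma mval_le_one (a : ℕ) : mval a ≤ 1 := by
  unfold mval; split
  · omega
  · split <;> omega
lemma neg_one_le_mval (a : ℕ) : -1 ≤ mval a := by
  unfold mval; split
  · omega
  · split <;> omega
@[simp] lemma mval_one : mval 1 = 1 := rfl
@[simp] lemma mval_zero : mval 0 = -1 := rfl
lemma mval_eq_one_iff (a : ℕ) : mval a = 1 ↔ a = 1 := by
  unfold mval; split
  · simp_all
  · split <;> simp_all
lemma mval_eq_negone_iff (a : ℕ) : mval a = -1 ↔ a = 0 := by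
  unfold mval; split
  · simp_all
  · split <;> simp_all
lemma mval_of_ge_two (a : ℕ) (h : 2 ≤ a) : mval a = 0 := by
  unfold mval
  rw [if_neg (by omega), if_neg (by omega)]

@[simp] lemma vsum_nil : vsum [] = 0 := rfl
@[simp] lemma vsum_cons (a : ℕ) (l : List ℕ) : vsum (a :: l) = mval a + vsum l := by
  simp [vsum]
@[simp] lemma vsum_append (l₁ l₂ : List ℕ) : vsum (l₁ ++ l₂) = vsum l₁ + vsum l₂ := by
  simp [vsum]
@[simp] lemma vsum_singleton (a : ℕ) : vsum [a] = mval a := by simp [vsum]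
lemma vsum_replicate_zero (m c : ℕ) (hc : 2 ≤ c) : vsum (List.replicate m c) = 0 := by
  induction m with
  | zero => rfl
  | succ k ih => simp [List.replicate_succ, ih, mval_of_ge_two c hc]

lemma vsum_take_drop (l : List ℕ) (k : ℕ) : vsum l = vsum (l.take k) + vsum (l.drop k) := by
  nth_rewrite 1 [← List.take_append_drop k l]
  rw [vsum_append]

lemma vsum_take_add (l : List ℕ) (k r : ℕ) :
    vsum (l.take (k + r)) = vsum (l.take k) + vsum ((l.drop k).take r) := by
  rw [List.take_add]; simp

lemma vsum_drop_take (w : List ℕ) (k r : ℕ) :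
    vsum ((w.drop k).take r) = vsum (w.take (k + r)) - vsum (w.take k) := by
  rw [vsum_take_add]; ring

lemma vsum_take_append (A B : List ℕ) (i : ℕ) :
    vsum ((A ++ B).take i) = vsum (A.take i) + vsum (B.take (i - A.length)) := by
  rw [List.take_append]; simp

lemma vsum_take_step (l : List ℕ) (i : ℕ) (h : i < l.length) :
    vsum (l.take (i + 1)) = vsum (l.take i) + mval l[i] := by
  simp only [vsum, List.map_take]
  rw [List.sum_take_succ _ _ (by simpa using h)]
  simp [h]

lemma vsum_take_le_succ (l : List ℕ) (i : ℕ) :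
    vsum (l.take (i + 1)) ≤ vsum (l.take i) + 1 := by
  by_cases h : i < l.length
  · rw [vsum_take_step l i h]; have := mval_le_one l[i]; omega
  · push_neg at h
    rw [List.take_of_length_le h, List.take_of_length_le (by omega)]; omega

lemma vsum_take_ge_succ (l : List ℕ) (i : ℕ) :
    vsum (l.take i) - 1 ≤ vsum (l.take (i + 1)) := by
  by_cases h : i < l.length
  · rw [vsum_take_step l i h]; have := neg_one_le_mval l[i]; omega
  · push_neg at h
    rw [List.take_of_length_le h, List.take_of_length_le (by omega)]; omega

end Helpers


section MotzkinAPI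

lemma motzkin_take_nonneg {q k : ℕ} {w : List ℕ} (h : w ∈ MotzkinSet q k) (i : ℕ) :
    0 ≤ vsum (w.take i) :=
  h.2.2.1 _ (List.take_prefix i w)

lemma motzkin_vsum {q k : ℕ} {w : List ℕ} (h : w ∈ MotzkinSet q k) : vsum w = 0 := h.2.2.2

lemma motzkin_lt {q k : ℕ} {w : List ℕ} (h : w ∈ MotzkinSet q k) : ∀ a ∈ w, a < q := h.2.1

lemma motzkin_length {q k : ℕ} {w : List ℕ} (h : w ∈ MotzkinSet q k) : w.length = k := h.1

lemma mk_motzkin {q : ℕ} {w : List ℕ} (hlt : ∀ a ∈ w, a < q)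
    (hpre : ∀ i, 0 ≤ vsum (w.take i)) (htot : vsum w = 0) :
    w ∈ MotzkinSet q w.length := by
  refine ⟨rfl, hlt, fun u hu => ?_, htot⟩
  rw [List.prefix_iff_eq_take.mp hu]
  exact hpre _

lemma nil_motzkin (q : ℕ) : ([] : List ℕ) ∈ MotzkinSet q 0 := by
  refine ⟨rfl, by simp, fun u hu => ?_, rfl⟩
  simp [List.prefix_nil.mp hu]

lemma replicate_motzkin (q m c : ℕ) (hc : 2 ≤ c) (hcq : c < q) :
    List.replicate m c ∈ MotzkinSet q m := by
  have h := mk_motzkin (q := q) (w := List.replicate m c)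
    (by intro a ha; rw [List.eq_of_mem_replicate ha]; exact hcq)
    (by intro i; rw [List.take_replicate, vsum_replicate_zero _ _ hc])
    (vsum_replicate_zero _ _ hc)
  simpa using h

lemma motzkin_append {q i j : ℕ} {A B : List ℕ} (hA : A ∈ MotzkinSet q i)
    (hB : B ∈ MotzkinSet q j) : A ++ B ∈ MotzkinSet q (i + j) := by
  have h := mk_motzkin (q := q) (w := A ++ B)
    (by intro a ha; rcases List.mem_append.mp ha with h | h
        exacts [motzkin_lt hA a h, motzkin_lt hB a h])
    (by intro r
        rw [vsum_take_append]
        have := motzkin_take_nonneg hA r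
        have := motzkin_take_nonneg hB (r - A.length)
        omega)
    (by rw [vsum_append, motzkin_vsum hA, motzkin_vsum hB]; ring)
  have hl : (A ++ B).length = i + j := by
    rw [List.length_append, motzkin_length hA, motzkin_length hB]
  rwa [hl] at h

end MotzkinAPI

section ElevatedAPI

lemma elevated_length {q k : ℕ} {w : List ℕ} (h : w ∈ ElevatedSet q k) : w.length = k := h.1

lemma elevated_two_le {q k : ℕ} {w : List ℕ} (h : w ∈ ElevatedSet q k) : 2 ≤ k := by
  obtain ⟨hlen, α, hα, rfl⟩ := h
  simp at hlen; omega

lemma elevated_head {q k : ℕ} {w : List ℕ} (h : w ∈ ElevatedSet q k) : ∃ t, w = 1 :: t := by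
  obtain ⟨hlen, α, hα, rfl⟩ := h
  exact ⟨_, rfl⟩

lemma elevated_last {q k : ℕ} {w : List ℕ} (h : w ∈ ElevatedSet q k) : ∃ s, w = s ++ [0] := by
  obtain ⟨hlen, α, hα, rfl⟩ := h
  exact ⟨1 :: α, rfl⟩

lemma elevated_vsum {q k : ℕ} {w : List ℕ} (h : w ∈ ElevatedSet q k) : vsum w = 0 := by
  obtain ⟨hlen, α, hα, rfl⟩ := h
  simp [motzkin_vsum hα]

lemma elevated_take_nonneg {q k : ℕ} {w : List ℕ} (h : w ∈ ElevatedSet q k) (r : ℕ) :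
    0 ≤ vsum (w.take r) := by
  obtain ⟨hlen, α, hα, rfl⟩ := h
  cases r with
  | zero => simp
  | succ s =>
    rw [List.take_succ_cons, vsum_cons, vsum_take_append]
    have h2 : 0 ≤ vsum (α.take s) := motzkin_take_nonneg hα s
    have h3 : -1 ≤ vsum ([0].take (s - α.length)) := by
      cases' Nat.eq_zero_or_pos (s - α.length) with hz hp
      · simp [hz]
      · rw [List.take_of_length_le (by simp; omega)]
        simp
    simp only [mval_one]
    omega

lemma elevated_interior {q k : ℕ} {w : List ℕ} (h : w ∈ ElevatedSet q k) (r : ℕ)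
    (hr0 : 0 < r) (hrk : r < k) : 1 ≤ vsum (w.take r) := by
  obtain ⟨hlen, α, hα, rfl⟩ := h
  have hαl : α.length = k - 2 := motzkin_length hα
  have hklen : k = α.length + 2 := by simp at hlen; omega
  cases r with
  | zero => omega
  | succ s =>
    rw [List.take_succ_cons, vsum_cons, vsum_take_append]
    have h2 : 0 ≤ vsum (α.take s) := motzkin_take_nonneg hα s
    have h3 : vsum ([0].take (s - α.length)) = 0 := by
      rw [show s - α.length = 0 by omega]; simp
    simp only [mval_one]
    omega

lemma elevated_lt {q k : ℕ} (hq : 3 ≤ q) {w : List ℕ} (h : w ∈ ElevatedSet q k) :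
    ∀ a ∈ w, a < q := by
  obtain ⟨hlen, α, hα, rfl⟩ := h
  intro a ha
  simp [List.mem_append] at ha
  rcases ha with rfl | ha | rfl
  · omega
  · exact motzkin_lt hα a ha
  · omega

lemma elevated_motzkin {q k : ℕ} (hq : 3 ≤ q) {w : List ℕ} (h : w ∈ ElevatedSet q k) :
    w ∈ MotzkinSet q k := by
  have hm := mk_motzkin (q := q) (w := w) (elevated_lt hq h)
    (elevated_take_nonneg h) (elevated_vsum h)
  rwa [elevated_length h] at hm

lemma mk_elevated {q : ℕ} (hq : 3 ≤ q) {w : List ℕ} (h2 : 2 ≤ w.length)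
    (hlt : ∀ a ∈ w, a < q) (hsum : vsum w = 0)
    (hint : ∀ r, 0 < r → r < w.length → 1 ≤ vsum (w.take r)) :
    w ∈ ElevatedSet q w.length := by
  have hne : w ≠ [] := by intro h; simp [h] at h2
  -- first letter is 1
  obtain ⟨a, t, rfl⟩ : ∃ a t, w = a :: t := by
    cases w with
    | nil => exact absurd rfl hne
    | cons a t => exact ⟨a, t, rfl⟩
  have hfirst : a = 1 := by
    have h1 := hint 1 (by omega) (by omega)
    rw [show (a :: t).take 1 = [a] by simp, vsum_singleton] at h1
    have := mval_le_one a
    exact (mval_eq_one_iff a).mp (by omega)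
  subst hfirst
  -- last letter is 0
  have htne : t ≠ [] := by
    intro h; subst h; simp at h2
  obtain ⟨α, c, rfl⟩ : ∃ α c, t = α ++ [c] := by
    refine ⟨t.dropLast, t.getLast htne, (List.dropLast_append_getLast htne).symm⟩
  have hlast : c = 0 := by
    have hlen : (1 :: (α ++ [c])).length = α.length + 2 := by simp
    have hi := hint (α.length + 1) (by omega) (by omega)
    have htake : (1 :: (α ++ [c])).take (α.length + 1) = 1 :: α := by
      rw [List.take_succ_cons]
      congr 1
      exact List.take_left
    rw [htake] at hi
    have hv : vsum (1 :: (α ++ [c])) = vsum (1 :: α) + mval c := by simp; ring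
    have := neg_one_le_mval c
    exact (mval_eq_negone_iff c).mp (by omega)
  subst hlast
  -- α is Motzkin
  have hαm : α ∈ MotzkinSet q α.length := by
    apply mk_motzkin
    · intro x hx; exact hlt x (by simp [hx])
    · intro i
      by_cases hi : i ≤ α.length
      · have hi2 := hint (i + 1) (by omega) (by simp; omega)
        have htake : (1 :: (α ++ [0])).take (i + 1) = 1 :: α.take i := by
          rw [List.take_succ_cons]
          congr 1
          exact List.take_append_of_le_length hi
        rw [htake, vsum_cons, mval_one] at hi2
        omega
      · push_neg at hi
        rw [List.take_of_length_le (by omega)]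
        have : vsum (1 :: (α ++ [0])) = 1 + vsum α + (-1) := by simp
        omega
    · have : vsum (1 :: (α ++ [0])) = 1 + vsum α + (-1) := by simp
      omega
  refine ⟨rfl, α, ?_, rfl⟩
  have : (1 :: (α ++ [0])).length - 2 = α.length := by simp
  rwa [this]

end ElevatedAPI


section Builders

lemma factor_left {β v : List ℕ} (m : ℕ) (hinf : β <:+: (List.replicate m 2 ++ v))
    (hhead : ∃ t, β = 1 :: t) : β <:+: v := by
  obtain ⟨s, t, heq⟩ := hinf
  by_cases hs : m ≤ s.length
  · have h1 : (s ++ β ++ t).drop m = s.drop m ++ β ++ t := by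
      rw [List.append_assoc, List.drop_append_of_le_length hs, List.append_assoc]
    have h2 : (List.replicate m 2 ++ v).drop m = v := by
      rw [List.drop_append_of_le_length (by simp), List.drop_replicate]
      simp
    refine ⟨s.drop m, t, ?_⟩
    rw [← h2, ← heq, h1]
  · push_neg at hs
    exfalso
    obtain ⟨t', rfl⟩ := hhead
    have h1 : (1 :: t') ++ t = (List.replicate m 2 ++ v).drop s.length := by
      rw [← heq, List.append_assoc, List.drop_left]
    have h2 : (List.replicate m 2 ++ v).drop s.length
        = List.replicate (m - s.length) 2 ++ v := by
      rw [List.drop_append_of_le_length (by simp; omega), List.drop_replicate]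
    rw [h2] at h1
    have h3 : List.replicate (m - s.length) 2 ++ v
        = 2 :: (List.replicate (m - s.length - 1) 2 ++ v) := by
      rw [show m - s.length = (m - s.length - 1) + 1 by omega, List.replicate_succ]
      simp
    rw [h3] at h1
    have := List.head_eq_of_cons_eq h1
    omega

lemma factor_right {β T : List ℕ} (m : ℕ) (hinf : β <:+: (T ++ List.replicate m 2))
    (hlast : ∃ s, β = s ++ [0]) : β.length ≤ T.length := by
  obtain ⟨s, t, heq⟩ := hinf
  by_contra hlen
  push_neg at hlen
  obtain ⟨s', rfl⟩ := hlast
  have hlen' : T.length < s'.length + 1 := by simpa using hlen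
  have hpre : s ++ (s' ++ [0]) <+: T ++ List.replicate m 2 := ⟨t, heq⟩
  have hlength : (s ++ (s' ++ [0])).length = s.length + s'.length + 1 := by
    simp only [List.length_append, List.length_cons, List.length_nil]
    omega
  have hp : s ++ (s' ++ [0]) = (T ++ List.replicate m 2).take (s.length + s'.length + 1) := by
    have h := List.prefix_iff_eq_take.mp hpre
    rwa [hlength] at h
  have hlenle : s.length + s'.length + 1 ≤ T.length + m := by
    have h := congrArg List.length heq
    simp only [List.length_append, List.length_cons, List.length_replicate,
      List.length_singleton] at h
    omega
  have hgt : T.length < s.length + s'.length + 1 := by omega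

  have htake : (T ++ List.replicate m 2).take (s.length + s'.length + 1)
      = T ++ List.replicate (s.length + s'.length + 1 - T.length) 2 := by
    rw [List.take_append, List.take_of_length_le (by omega), List.take_replicate]
    congr 2
    omega
  rw [htake] at hp
  have hrep : List.replicate (s.length + s'.length + 1 - T.length) 2
      = List.replicate (s.length + s'.length - T.length) 2 ++ [2] := by
    rw [show s.length + s'.length + 1 - T.length = (s.length + s'.length - T.length) + 1 by omega]
    rw [List.replicate_succ']
  rw [hrep] at hp
  have h0 : (s ++ (s' ++ [0])).getLast? = some 0 := by
    rw [show s ++ (s' ++ [0]) = (s ++ s') ++ [0] by simp]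
    exact List.getLast?_concat
  have h2 : (T ++ (List.replicate (s.length + s'.length - T.length) 2 ++ [2])).getLast? = some 2 := by
    rw [show T ++ (List.replicate (s.length + s'.length - T.length) 2 ++ [2])
        = (T ++ List.replicate (s.length + s'.length - T.length) 2) ++ [2] by simp]
    exact List.getLast?_concat
  rw [hp] at h0
  rw [h0] at h2
  simp at h2

lemma setA_subset_CBFS {q n : ℕ} : SetA q n ⊆ CBFS q n := fun _ h => Or.inl (Or.inl h)
lemma setB_subset_CBFS {q n : ℕ} : SetB q n ⊆ CBFS q n := fun _ h => Or.inl (Or.inr h)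
lemma setC_subset_CBFS {q n : ℕ} : SetC q n ⊆ CBFS q n := fun _ h => Or.inr h

/-- Building an A-word by left-padding x++β with 2's. -/
lemma padA {q n : ℕ} (hq : 3 ≤ q) (hn : 3 ≤ n) (x β : List ℕ) (j : ℕ)
    (hx : x ∈ MotzkinSet q x.length) (hβ : β ∈ ElevatedSet q j)
    (hj : (n + 1) / 2 ≤ j) (hle : x.length + j ≤ n - 1) :
    List.replicate (n - j - x.length) 2 ++ (x ++ β) ∈ SetA q n := by
  have hβ2 : 2 ≤ j := elevated_two_le hβ
  constructor
  · refine ⟨n - j, by omega, List.replicate (n - j - x.length) 2 ++ x, ?_, β, ?_, by simp⟩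
    · have := motzkin_append (replicate_motzkin q (n - j - x.length) 2 (by omega) (by omega)) hx
      rwa [show n - j - x.length + x.length = n - j by omega] at this
    · rwa [show n - (n - j) = j by omega]
  · rintro ⟨e₁, he₁, e₂, he₂, heq⟩
    obtain ⟨t', he⟩ := elevated_head he₁
    have hpad : 1 ≤ n - j - x.length := by omega
    have hcons : List.replicate (n - j - x.length) 2 ++ (x ++ β)
        = 2 :: (List.replicate (n - j - x.length - 1) 2 ++ (x ++ β)) := by
      rw [show n - j - x.length = (n - j - x.length - 1) + 1 by omega, List.replicate_succ]
      simp
    rw [hcons, he] at heq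
    have := List.head_eq_of_cons_eq heq.symm
    omega

/-- An elevated word of full length n is in A. -/
lemma elevated_setA {q n : ℕ} (hq : 3 ≤ q) (hn : 3 ≤ n) {w' : List ℕ}
    (h : w' ∈ ElevatedSet q n) : w' ∈ SetA q n := by
  constructor
  · exact ⟨0, by omega, [], nil_motzkin q, w', by simpa using h, by simp⟩
  · rintro ⟨e₁, he₁, e₂, he₂, heq⟩
    have hl1 : e₁.length = n / 2 := elevated_length he₁
    have h2 : 2 ≤ n / 2 := elevated_two_le he₁
    have hv : vsum e₁ = 0 := elevated_vsum he₁
    have he₁take : e₁ = w'.take (n / 2) := by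
      rw [heq, ← hl1, List.take_left]
    have hint := elevated_interior h (n / 2) (by omega) (by omega)
    rw [← he₁take, hv] at hint
    omega

/-- Building an elevated word of length n from a suffix-piece T with positive prefix sums. -/
lemma elevA {q n : ℕ} (hq : 3 ≤ q) (hn : 3 ≤ n) (T : List ℕ)
    (hT1 : 1 ≤ T.length) (hT2 : T.length ≤ n - 1)
    (hlt : ∀ a ∈ T, a < q)
    (hsums : ∀ r, 0 < r → r ≤ T.length → 1 ≤ vsum (T.take r))
    (hv : vsum T = 1) :
    T ++ (List.replicate (n - T.length - 1) 2 ++ [0]) ∈ SetA q n := by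
  set w' := T ++ (List.replicate (n - T.length - 1) 2 ++ [0]) with hw'
  have hlen : w'.length = n := by simp [hw']; omega
  have helev : w' ∈ ElevatedSet q n := by
    have h := mk_elevated hq (w := w') (by omega)
      (by intro a ha
          simp only [hw', List.mem_append, List.mem_replicate, List.mem_singleton] at ha
          rcases ha with ha | ⟨_, rfl⟩ | rfl
          exacts [hlt a ha, by omega, by omega])
      (by simp [hw', vsum_replicate_zero _ 2 (by omega), hv])
      ?_
    · rwa [hlen] at h
    · intro r hr0 hrn
      rw [hlen] at hrn
      rw [hw', vsum_take_append]
      by_cases hr : r ≤ T.length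
      · rw [show r - T.length = 0 by omega]
        simpa using hsums r hr0 hr
      · push_neg at hr
        rw [List.take_of_length_le (by omega), hv]
        have htk : (List.replicate (n - T.length - 1) 2 ++ [0]).take (r - T.length)
            = List.replicate (r - T.length) 2 := by
          rw [List.take_append_of_le_length (by simp; omega), List.take_replicate]
          congr 1; omega
        rw [htk, vsum_replicate_zero _ 2 (by omega)]
        omega
  exact elevated_setA hq hn helev

/-- Building a C-word from a short elevated prefix T. -/
lemma shortElevC {q n : ℕ} (hq : 3 ≤ q) (hn : 3 ≤ n) (T : List ℕ) (ℓ : ℕ)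
    (hT : T ∈ ElevatedSet q ℓ) (hℓn : ℓ ≤ n - 1) (hshort : ℓ < (n + 1) / 2) :
    T ++ (List.replicate (n - 1 - ℓ) 2 ++ [0]) ∈ SetC q n := by
  have hTl : T.length = ℓ := elevated_length hT
  refine ⟨T ++ List.replicate (n - 1 - ℓ) 2, ?_, ?_, by simp⟩
  · have := motzkin_append (elevated_motzkin hq hT) (replicate_motzkin q (n - 1 - ℓ) 2 (by omega) (by omega))
    rwa [show ℓ + (n - 1 - ℓ) = n - 1 by omega] at this
  · intro j hj β hβ hinf
    have := factor_right (m := n - 1 - ℓ) hinf (elevated_last hβ)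
    have hβl : β.length = j := elevated_length hβ
    omega

/-- Building a C-word from a Motzkin v with no long elevated factor, right-padded. -/
lemma prefC {q n : ℕ} (hq : 3 ≤ q) (hn : 3 ≤ n) (v : List ℕ)
    (hv : v ∈ MotzkinSet q v.length) (hlen : v.length ≤ n - 2)
    (hnofac : ∀ j, (n + 1) / 2 ≤ j → ∀ β ∈ ElevatedSet q j, ¬ β <:+: v) :
    (List.replicate (n - 1 - v.length) 2 ++ v) ++ [0] ∈ SetC q n := by
  refine ⟨List.replicate (n - 1 - v.length) 2 ++ v, ?_, ?_, rfl⟩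
  · have := motzkin_append (replicate_motzkin q (n - 1 - v.length) 2 (by omega) (by omega)) hv
    rwa [show n - 1 - v.length + v.length = n - 1 by omega] at this
  · intro j hj β hβ hinf
    exact hnofac j hj β hβ (factor_left _ hinf (elevated_head hβ))

end Builders


section LemmaF

lemma motzkin_self {q k : ℕ} {w : List ℕ} (h : w ∈ MotzkinSet q k) :
    w ∈ MotzkinSet q w.length := by
  have := motzkin_length h
  subst this
  exact h

set_option maxHeartbeats 2000000 in
lemma lemmaF {q n : ℕ} (hq : 3 ≤ q) (hn : 3 ≤ n) (w v : List ℕ) (hwlen : w.length = n)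
    (hv : v ∈ MotzkinSet q v.length) (hvp : v <+: w) (hvlt : v.length ≤ n - 1)
    (hfac : ∃ j, (n + 1) / 2 ≤ j ∧ ∃ β ∈ ElevatedSet q j, β <:+: v) :
    ∃ w' ∈ CBFS q n, ∃ u, u <+: w ∧ u ≠ [] ∧ u.length < w.length ∧ u <:+ w' := by
  classical
  have hex : ∃ m, ∃ x β y : List ℕ, ∃ j, x.length = m ∧ (n + 1) / 2 ≤ j ∧
      β ∈ ElevatedSet q j ∧ v = x ++ β ++ y := by
    obtain ⟨j, hj, β, hβ, s, t, heq⟩ := hfac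
    exact ⟨s.length, s, β, t, j, rfl, hj, hβ, heq.symm⟩
  have hex2 : ∃ m, (∃ x β y : List ℕ, ∃ j, x.length = m ∧ (n + 1) / 2 ≤ j ∧
      β ∈ ElevatedSet q j ∧ v = x ++ β ++ y) ∧
      ∀ m' < m, ¬ (∃ x β y : List ℕ, ∃ j, x.length = m' ∧ (n + 1) / 2 ≤ j ∧
      β ∈ ElevatedSet q j ∧ v = x ++ β ++ y) := by
    obtain ⟨m, hm⟩ := hex
    clear hfac
    induction m using Nat.strong_induction_on with
    | _ m ih =>
      by_cases h : ∃ m' < m, ∃ x β y : List ℕ, ∃ j, x.length = m' ∧ (n + 1) / 2 ≤ j ∧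
          β ∈ ElevatedSet q j ∧ v = x ++ β ++ y
      · obtain ⟨m', hlt, hm'⟩ := h; exact ih m' hlt hm'
      · exact ⟨m, hm, fun m' hlt hP' => h ⟨m', hlt, hP'⟩⟩
  obtain ⟨m₀, ⟨x, β, y, j, hxlen, hj, hβ, heq⟩, hmin⟩ := hex2
  have hβl : β.length = j := elevated_length hβ
  have hβv : vsum β = 0 := elevated_vsum hβ
  have hβ2 : 2 ≤ j := elevated_two_le hβ
  have hvv : vsum v = 0 := motzkin_vsum hv
  have hvlen : v.length = x.length + j + y.length := by
    rw [heq]; simp [hβl]; omega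
  -- prefix sums of x are nonnegative
  have hxeq : x = v.take x.length := by
    rw [heq, List.append_assoc, List.take_left]
  have hxpref : ∀ r, 0 ≤ vsum (x.take r) := by
    intro r
    rw [hxeq, List.take_take]
    exact motzkin_take_nonneg hv _
  -- all suffix sums of x are nonpositive
  have hsuffx : ∀ k, k ≤ x.length → vsum (x.drop (x.length - k)) ≤ 0 := by
    intro k
    induction k using Nat.strong_induction_on with
    | _ k ih =>
      intro hk
      rcases Nat.eq_zero_or_pos k with rfl | hk1
      · simp [List.drop_length]
      by_contra hpos
      push_neg at hpos
      obtain ⟨σ, hσ⟩ : ∃ σ : List ℕ, σ = x.drop (x.length - k) := ⟨_, rfl⟩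
      rw [← hσ] at hpos
      have hσlen : σ.length = k := by rw [hσ, List.length_drop]; omega
      -- vsum σ = 1
      have hd := List.drop_eq_getElem_cons (l := x) (i := x.length - k) (by omega)
      rw [← hσ] at hd
      have hih1 : vsum (x.drop (x.length - (k - 1))) ≤ 0 := ih (k - 1) (by omega) (by omega)
      have hσv : vsum σ = 1 := by
        rw [hd, vsum_cons]
        rw [show x.length - k + 1 = x.length - (k - 1) by omega]
        have := mval_le_one x[x.length - k]
        have hge : (1 : ℤ) ≤ vsum σ := hpos
        rw [hd, vsum_cons, show x.length - k + 1 = x.length - (k - 1) by omega] at hge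
        omega
      -- prefix sums of σ are ≥ 1
      have hσpref : ∀ r, 0 < r → 1 ≤ vsum (σ.take r) := by
        intro r hr
        by_cases hrk : r < k
        · have hdrop : σ.drop r = x.drop (x.length - (k - r)) := by
            rw [hσ, List.drop_drop]
            congr 1
            omega
          have hle : vsum (σ.drop r) ≤ 0 := by
            rw [hdrop]; exact ih (k - r) (by omega) (by omega)
          have hsplit := vsum_take_drop σ r
          omega
        · push_neg at hrk
          rw [List.take_of_length_le (by omega), hσv]
      -- vsum x ≥ 1
      have hxv : 1 ≤ vsum x := by
        have hsplit := vsum_take_drop x (x.length - k)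
        have := hxpref (x.length - k)
        rw [← hσ] at hsplit
        omega
      -- vsum y ≤ -1
      have hyv : vsum y ≤ -1 := by
        have : vsum v = vsum x + vsum β + vsum y := by rw [heq]; simp; ring
        omega
      -- first time y's prefix sums reach -1
      have hey2 : ∃ ℓ, (vsum (y.take ℓ) ≤ -1) ∧ ∀ ℓ' < ℓ, ¬ (vsum (y.take ℓ') ≤ -1) := by
        have hst : ∃ ℓ, vsum (y.take ℓ) ≤ -1 := ⟨y.length, by rw [List.take_length]; omega⟩
        obtain ⟨ℓ, hℓ⟩ := hst
        induction ℓ using Nat.strong_induction_on with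
        | _ ℓ ihℓ =>
          by_cases h : ∃ ℓ' < ℓ, vsum (y.take ℓ') ≤ -1
          · obtain ⟨ℓ', hlt, hℓ'⟩ := h; exact ihℓ ℓ' hlt hℓ'
          · exact ⟨ℓ, hℓ, fun ℓ' hlt hc => h ⟨ℓ', hlt, hc⟩⟩
      obtain ⟨ℓ₀, hℓ₀, hℓmin⟩ := hey2
      have hz0 : ∀ s, s < ℓ₀ → 0 ≤ vsum (y.take s) := by
        intro s hs
        have := hℓmin s hs
        omega
      have hℓpos : 0 < ℓ₀ := by
        rcases Nat.eq_zero_or_pos ℓ₀ with h0 | h; · rw [h0] at hℓ₀; simp at hℓ₀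
        exact h
      have hℓle : ℓ₀ ≤ y.length := by
        by_contra hgt
        push_neg at hgt
        rw [List.take_of_length_le (by omega)] at hℓ₀
        have := hℓmin y.length (by omega)
        rw [List.take_length] at this
        omega
      have hzprev : 0 ≤ vsum (y.take (ℓ₀ - 1)) := hz0 _ (by omega)
      have hzstep : vsum (y.take ((ℓ₀ - 1) + 1)) = vsum (y.take (ℓ₀ - 1)) + mval (y[ℓ₀ - 1]'(by omega)) :=
        vsum_take_step y (ℓ₀ - 1) (by omega)
      rw [show (ℓ₀ - 1) + 1 = ℓ₀ by omega] at hzstep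
      have hmvz := mval_le_one (y[ℓ₀ - 1]'(by omega))
      have hmvz2 := neg_one_le_mval (y[ℓ₀ - 1]'(by omega))
      have hzv : vsum (y.take ℓ₀) = -1 := by omega
      -- build the longer elevated factor
      obtain ⟨F, hF⟩ : ∃ F : List ℕ, F = σ ++ (β ++ y.take ℓ₀) := ⟨_, rfl⟩
      have hFlen : F.length = k + j + ℓ₀ := by
        rw [hF]; simp [hσlen, hβl]
        omega
      have hFelev : F ∈ ElevatedSet q F.length := by
        apply mk_elevated hq (by omega)
        · intro a ha
          rw [hF] at ha
          simp only [List.mem_append] at ha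
          rcases ha with ha | ha | ha
          · rw [hσ] at ha
            have : a ∈ x := List.mem_of_mem_drop ha
            have : a ∈ v := by rw [heq]; simp [this]
            exact motzkin_lt hv a this
          · exact elevated_lt hq hβ a ha
          · have : a ∈ y := List.mem_of_mem_take ha
            have : a ∈ v := by rw [heq]; simp [this]
            exact motzkin_lt hv a this
        · rw [hF]; simp [hβv, hσv, hzv]
        · intro r hr0 hrn
          rw [hFlen] at hrn
          rw [hF, vsum_take_append, vsum_take_append, hσlen, hβl]
          have h1 : 1 ≤ vsum (σ.take r) := hσpref r hr0
          have h2 : 0 ≤ vsum (β.take (r - k)) := elevated_take_nonneg hβ _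
          have h3 : 0 ≤ vsum ((y.take ℓ₀).take (r - k - j)) := by
            rw [List.take_take]
            apply hz0
            omega
          omega
      -- contradiction with minimality
      apply hmin (x.length - k) (by omega)
      refine ⟨x.take (x.length - k), F, y.drop ℓ₀, F.length, ?_, ?_, hFelev, ?_⟩
      · rw [List.length_take]; omega
      · omega
      · rw [heq, hF, hσ]
        simp only [List.append_assoc]
        rw [← List.append_assoc (x.take (x.length - k)) (x.drop (x.length - k)),
          List.take_append_drop, List.take_append_drop]
  -- x is a Motzkin word
  have hxv0 : vsum x = 0 := by
    rcases Nat.eq_zero_or_pos x.length with h0 | h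
    · rw [List.length_eq_zero_iff.mp h0]; rfl
    · have h1 := hsuffx x.length (le_refl _)
      rw [Nat.sub_self, List.drop_zero] at h1
      have h2 := hxpref x.length
      rw [List.take_length] at h2
      omega
  have hxm : x ∈ MotzkinSet q x.length := by
    apply mk_motzkin
    · intro a ha
      have : a ∈ v := by rw [heq]; simp [ha]
      exact motzkin_lt hv a this
    · exact hxpref
    · exact hxv0
  -- build the final word
  have hxj : x.length + j ≤ n - 1 := by omega
  have hA := padA hq hn x β j hxm hβ hj hxj
  refine ⟨List.replicate (n - j - x.length) 2 ++ (x ++ β), setA_subset_CBFS hA,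
    x ++ β, ?_, ?_, ?_, ⟨List.replicate (n - j - x.length) 2, rfl⟩⟩
  · have h1 : (x ++ β) <+: v := ⟨y, by rw [heq]⟩
    exact h1.trans hvp
  · obtain ⟨t', ht'⟩ := elevated_head hβ
    simp [ht']
  · rw [hwlen]
    simp only [List.length_append, hβl]
    omega

end LemmaF


section MinMax

lemma exists_min_nat {Q : ℕ → Prop} (hex : ∃ i, Q i) :
    ∃ k, Q k ∧ ∀ j < k, ¬ Q j := by
  obtain ⟨i, hQi⟩ := hex
  induction i using Nat.strong_induction_on with
  | _ i ih =>
    by_cases h : ∃ j < i, Q j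
    · obtain ⟨j, hj, hQj⟩ := h; exact ih j hj hQj
    · exact ⟨i, hQi, fun j hj hQj => h ⟨j, hj, hQj⟩⟩

lemma exists_greatest_nat {Q : ℕ → Prop} {N : ℕ} (hex : ∃ i, i ≤ N ∧ Q i) :
    ∃ k, k ≤ N ∧ Q k ∧ ∀ j, k < j → j ≤ N → ¬ Q j := by
  obtain ⟨i, hiN, hQi⟩ := hex
  have key : ∀ m i, N - i = m → i ≤ N → Q i →
      ∃ k, k ≤ N ∧ Q k ∧ ∀ j, k < j → j ≤ N → ¬ Q j := by
    intro m
    induction m using Nat.strong_induction_on with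
    | _ m ih =>
      intro i hm hiN hQi
      by_cases h : ∃ j, i < j ∧ j ≤ N ∧ Q j
      · obtain ⟨j, hij, hjN, hQj⟩ := h
        exact ih (N - j) (by omega) j rfl hjN hQj
      · exact ⟨i, hiN, hQi, fun j hij hjN hQj => h ⟨j, hij, hjN, hQj⟩⟩
  exact key (N - i) i rfl hiN hQi

end MinMax


set_option maxHeartbeats 4000000

/-- CBFS_q(n) is non-expandable on BF_q(n): for every bifix-free word
w ∈ BF_q(n) \ CBFS_q(n) there is w' ∈ CBFS_q(n) such that some nonempty proper prefix
of w is a suffix of w', or some nonempty proper prefix of w' is a suffix of w. -/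
theorem cbfs_non_expandable (q n : ℕ) (hq : 3 ≤ q) (hn : 3 ≤ n)
    (w : List ℕ) (hw : w ∈ BF q n \ CBFS q n) :
    ∃ w' ∈ CBFS q n,
      (∃ u, u <+: w ∧ u ≠ [] ∧ u.length < w.length ∧ u <:+ w') ∨
      (∃ u, u <+: w' ∧ u ≠ [] ∧ u.length < w'.length ∧ u <:+ w) := by
  classical
  obtain ⟨hwBF, hwn⟩ := hw
  obtain ⟨hwlen, hwlt, _hbf⟩ := hwBF
  have hA : w ∉ SetA q n := fun h => hwn (setA_subset_CBFS h)
  have hB : w ∉ SetB q n := fun h => hwn (setB_subset_CBFS h)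
  have hC : w ∉ SetC q n := fun h => hwn (setC_subset_CBFS h)
  have hne : w ≠ [] := by
    intro h; rw [h] at hwlen; simp at hwlen; omega
  have hsplit : w = w.dropLast ++ [w.getLast hne] := (List.dropLast_append_getLast hne).symm
  have hbq : w.getLast hne < q := hwlt _ (List.getLast_mem hne)
  have hbsuf : [w.getLast hne] <:+ w := ⟨w.dropLast, hsplit.symm⟩
  by_cases hb1 : w.getLast hne = 1
  · -- last letter 1 : use a B-word starting with 1
    refine ⟨1 :: ([] ++ (1 :: (List.replicate (n - 3) 2 ++ [0]))), setB_subset_CBFS ?_,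
      Or.inr ⟨[1], ⟨[] ++ (1 :: (List.replicate (n - 3) 2 ++ [0])), rfl⟩, by simp, ?_, ?_⟩⟩
    · refine ⟨0, by omega, [], nil_motzkin q, 1 :: (List.replicate (n - 3) 2 ++ [0]),
        ⟨?_, List.replicate (n - 3) 2, ?_, rfl⟩, rfl⟩
      · simp only [List.length_cons, List.length_append, List.length_replicate,
          List.length_nil]
        omega
      · have := replicate_motzkin q (n - 3) 2 (le_refl 2) (by omega)
        rwa [show n - 0 - 1 - 2 = n - 3 by omega]
    · simp only [List.length_cons, List.length_append, List.length_replicate,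
        List.length_nil]
      omega
    · rw [← hb1]; exact hbsuf
  by_cases hb0 : w.getLast hne = 0
  case neg =>
    -- last letter is a color c ≥ 2 : use the C-word c^(n-1)0
    have hb2 : 2 ≤ w.getLast hne := by omega
    refine ⟨List.replicate (n - 1) (w.getLast hne) ++ [0], setC_subset_CBFS ?_,
      Or.inr ⟨[w.getLast hne], ?_, by simp, ?_, hbsuf⟩⟩
    · refine ⟨List.replicate (n - 1) (w.getLast hne), replicate_motzkin q (n - 1) _ hb2 hbq,
        ?_, rfl⟩
      intro j hj β hβ hinf
      obtain ⟨t', ht'⟩ := elevated_head hβ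
      have h1 : (1 : ℕ) ∈ List.replicate (n - 1) (w.getLast hne) := by
        apply hinf.subset
        rw [ht']; exact List.mem_cons_self
      have := List.eq_of_mem_replicate h1
      omega
    · refine ⟨List.replicate (n - 2) (w.getLast hne) ++ [0], ?_⟩
      rw [show n - 1 = (n - 2) + 1 by omega, List.replicate_succ]
      simp
    · simp only [List.length_cons, List.length_append, List.length_replicate,
        List.length_nil]
      omega
  -- last letter is 0
  case pos =>
  have hPn : vsum w = vsum (w.take (n - 1)) - 1 := by
    have hdl : w.dropLast = w.take (n - 1) := by
      rw [List.dropLast_eq_take, hwlen]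
    nth_rewrite 1 [hsplit]
    rw [hb0, hdl]
    simp only [vsum_append, vsum_singleton, mval_zero]
    omega
  by_cases h0 : ∃ i, i ≤ n - 1 ∧ vsum (w.take i) < 0
  · -- case (0) : some prefix sum is negative
    obtain ⟨i₀, ⟨hi₀N, hi₀neg⟩, hi₀min⟩ := exists_min_nat h0
    have hmin' : ∀ j < i₀, 0 ≤ vsum (w.take j) := by
      intro j hj
      by_contra hc
      exact hi₀min j hj ⟨by omega, by omega⟩
    have hi₀pos : 1 ≤ i₀ := by
      rcases Nat.eq_zero_or_pos i₀ with h | h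
      · rw [h] at hi₀neg; simp at hi₀neg
      · exact h
    have hprev : 0 ≤ vsum (w.take (i₀ - 1)) := hmin' _ (by omega)
    have hstep : vsum (w.take ((i₀ - 1) + 1)) =
        vsum (w.take (i₀ - 1)) + mval (w[i₀ - 1]'(by omega)) :=
      vsum_take_step w (i₀ - 1) (by omega)
    rw [show (i₀ - 1) + 1 = i₀ by omega] at hstep
    have hmv1 := mval_le_one (w[i₀ - 1]'(by omega))
    have hmv2 := neg_one_le_mval (w[i₀ - 1]'(by omega))
    have hprev0 : vsum (w.take (i₀ - 1)) = 0 := by omega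
    have hlet0 : w[i₀ - 1]'(by omega) = 0 := by
      apply (mval_eq_negone_iff _).mp
      omega
    have hueq : w.take i₀ = w.take (i₀ - 1) ++ [0] := by
      have h := List.take_succ (l := w) (i := i₀ - 1)
      rw [show (i₀ - 1) + 1 = i₀ by omega] at h
      rw [h, List.getElem?_eq_getElem (by omega), hlet0]
      rfl
    have hvm : w.take (i₀ - 1) ∈ MotzkinSet q (w.take (i₀ - 1)).length := by
      apply mk_motzkin
      · intro a ha; exact hwlt a (List.mem_of_mem_take ha)
      · intro r
        rw [List.take_take]
        exact hmin' _ (by omega)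
      · exact hprev0
    have hvlen : (w.take (i₀ - 1)).length = i₀ - 1 := by
      rw [List.length_take]; omega
    by_cases hfac : ∃ j, (n + 1) / 2 ≤ j ∧ ∃ β ∈ ElevatedSet q j, β <:+: w.take (i₀ - 1)
    · obtain ⟨w', hw', u, h1, h2, h3, h4⟩ :=
        lemmaF hq hn w (w.take (i₀ - 1)) hwlen hvm (List.take_prefix _ w) (by omega) hfac
      exact ⟨w', hw', Or.inl ⟨u, h1, h2, h3, h4⟩⟩
    · have hnofac : ∀ j, (n + 1) / 2 ≤ j → ∀ β ∈ ElevatedSet q j, ¬ β <:+: w.take (i₀ - 1) :=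
        fun j hj β hβ hinf => hfac ⟨j, hj, β, hβ, hinf⟩
      have hCm := prefC hq hn (w.take (i₀ - 1)) hvm (by omega) hnofac
      refine ⟨_, setC_subset_CBFS hCm, Or.inl ⟨w.take (i₀ - 1) ++ [0], ?_, by simp, ?_, ?_⟩⟩
      · rw [← hueq]; exact List.take_prefix _ w
      · rw [hwlen]; simp [hvlen]; omega
      · exact ⟨List.replicate (n - 1 - (w.take (i₀ - 1)).length) 2, by simp⟩
  · -- all prefix sums up to n-1 are nonnegative
    push_neg at h0
    have hP : ∀ i, i ≤ n - 1 → 0 ≤ vsum (w.take i) := h0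
    have hVge : -1 ≤ vsum w := by
      have := hP (n - 1) (le_refl _)
      omega
    have hVcases : vsum w = -1 ∨ vsum w = 0 ∨ vsum w = 1 ∨ 2 ≤ vsum w := by omega
    -- helper facts about suffixes
    rcases hVcases with hV | hV | hV | hV
    · -- V = -1 : w = γ0 with γ Motzkin; use the long factor
      have hγm : w.take (n - 1) ∈ MotzkinSet q (w.take (n - 1)).length := by
        apply mk_motzkin
        · intro a ha; exact hwlt a (List.mem_of_mem_take ha)
        · intro r
          rw [List.take_take]
          exact hP _ (by omega)
        · omega
      have hγw : w = w.take (n - 1) ++ [0] := by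
        nth_rewrite 1 [hsplit]
        rw [hb0, List.dropLast_eq_take, hwlen]
      have hγlen : (w.take (n - 1)).length = n - 1 := by
        rw [List.length_take]; omega
      have hfac : ∃ j, (n + 1) / 2 ≤ j ∧ ∃ β ∈ ElevatedSet q j, β <:+: w.take (n - 1) := by
        by_contra hno
        apply hC
        refine ⟨w.take (n - 1), ?_, fun j hj β hβ hinf => hno ⟨j, hj, β, hβ, hinf⟩, hγw⟩
        rwa [hγlen] at hγm
      obtain ⟨w', hw', u, h1, h2, h3, h4⟩ :=
        lemmaF hq hn w (w.take (n - 1)) hwlen hγm ⟨[0], hγw.symm⟩ (by omega) hfac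
      exact ⟨w', hw', Or.inl ⟨u, h1, h2, h3, h4⟩⟩
    · -- V = 0
      have hPn1 : vsum (w.take (n - 1)) = 1 := by omega
      obtain ⟨k₀, hk₀N, hQ₀, hgr₀⟩ :=
        exists_greatest_nat (Q := fun k => vsum (w.take k) = 0) (N := n - 1) ⟨0, by omega, by simp⟩
      have hpos : ∀ j, k₀ < j → j ≤ n - 1 → 1 ≤ vsum (w.take j) := by
        intro j h1 h2
        have := hgr₀ j h1 h2
        have := hP j h2
        omega
      have hk₀n2 : k₀ ≤ n - 2 := by
        by_contra hc
        have : k₀ = n - 1 := by omega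
        rw [this, hPn1] at hQ₀
        omega
      have hTsum : ∀ r, vsum ((w.drop k₀).take r) = vsum (w.take (k₀ + r)) - 0 := by
        intro r
        rw [vsum_drop_take, hQ₀]
      have hTlen : (w.drop k₀).length = n - k₀ := by rw [List.length_drop]; omega
      have hTint : ∀ r, 0 < r → r < (w.drop k₀).length → 1 ≤ vsum ((w.drop k₀).take r) := by
        intro r hr0 hrl
        rw [hTsum r]
        have := hpos (k₀ + r) (by omega) (by omega)
        omega
      have hTv : vsum (w.drop k₀) = 0 := by
        have := vsum_take_drop w k₀
        rw [hQ₀] at this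
        omega
      have helevT : w.drop k₀ ∈ ElevatedSet q (w.drop k₀).length := by
        apply mk_elevated hq (by omega)
        · intro a ha; exact hwlt a (List.mem_of_mem_drop ha)
        · exact hTv
        · exact hTint
      by_cases hk₀0 : k₀ = 0
      · exfalso
        apply hA
        apply elevated_setA hq hn
        have h := helevT
        rw [hk₀0, List.drop_zero, hwlen] at h
        exact h
      by_cases hk₀half : k₀ ≤ n / 2
      · -- w ∈ A-left part; treat the removed case
        have hαm : w.take k₀ ∈ MotzkinSet q k₀ := by
          have h := mk_motzkin (q := q) (w := w.take k₀)
            (fun a ha => hwlt a (List.mem_of_mem_take ha))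
            (by intro r
                rw [List.take_take]
                exact hP _ (by omega))
            hQ₀
          rwa [List.length_take, min_eq_left (by omega)] at h
        have hleft : w ∈ {w | ∃ i ≤ n / 2, ∃ α ∈ MotzkinSet q i,
            ∃ β ∈ ElevatedSet q (n - i), w = α ++ β} := by
          refine ⟨k₀, hk₀half, w.take k₀, hαm, w.drop k₀, ?_, (List.take_append_drop k₀ w).symm⟩
          rwa [hTlen] at helevT
        by_cases hrem : w ∈ {w : List ℕ | ∃ α ∈ ElevatedSet q (n / 2),
            ∃ β ∈ ElevatedSet q (n / 2), w = α ++ β}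
        · obtain ⟨e₁, he₁, e₂, he₂, heq2⟩ := hrem
          have hl₁ : e₁.length = n / 2 := elevated_length he₁
          have hl₂ : e₂.length = n / 2 := elevated_length he₂
          have heven : n / 2 + n / 2 = n := by
            have := congrArg List.length heq2
            rw [hwlen] at this
            simp [hl₁, hl₂] at this
            omega
          have h2e : 2 ≤ n / 2 := elevated_two_le he₁
          have hA2 := padA hq hn [] e₁ (n / 2) (nil_motzkin q) he₁ (by omega) (by simp; omega)
          refine ⟨_, setA_subset_CBFS hA2, Or.inl ⟨e₁, ⟨e₂, heq2.symm⟩, ?_, ?_, ?_⟩⟩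
          · intro hc; rw [hc] at hl₁; simp at hl₁; omega
          · rw [hwlen, hl₁]; omega
          · exact ⟨List.replicate (n - n / 2 - ([] : List ℕ).length) 2, by simp⟩
        · exact absurd ⟨hleft, hrem⟩ hA
      · -- k₀ > n/2 : short elevated suffix, C-word
        push_neg at hk₀half
        have hCm := shortElevC hq hn (w.drop k₀) (w.drop k₀).length helevT
          (by omega) (by omega)
        refine ⟨_, setC_subset_CBFS hCm,
          Or.inr ⟨w.drop k₀, ⟨_, rfl⟩, ?_, ?_, List.drop_suffix k₀ w⟩⟩
        · apply List.ne_nil_of_length_pos; omega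
        · simp only [List.length_append, List.length_replicate, List.length_cons,
            List.length_nil]
          omega
    · -- V = 1
      obtain ⟨k₁, hk₁N, hQ₁, hgr₁⟩ :=
        exists_greatest_nat (Q := fun k => vsum (w.take k) = 0) (N := n - 1) ⟨0, by omega, by simp⟩
      have hpos : ∀ j, k₁ < j → j ≤ n - 1 → 1 ≤ vsum (w.take j) := by
        intro j h1 h2
        have := hgr₁ j h1 h2
        have := hP j h2
        omega
      by_cases hk₁0 : k₁ = 0
      · -- w = 1 w₂ with w₂ Motzkin of length n-1
        subst hk₁0
        have hP1 : vsum (w.take 1) = 1 := by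
          have h1 := hpos 1 (by omega) (by omega)
          have h2 := vsum_take_le_succ w 0
          simp at h2
          omega
        have hw2sum : ∀ r, vsum ((w.drop 1).take r) = vsum (w.take (1 + r)) - 1 := by
          intro r
          rw [vsum_drop_take, hP1]
        have hw2len : (w.drop 1).length = n - 1 := by rw [List.length_drop]; omega
        have hw2v : vsum (w.drop 1) = 0 := by
          have := vsum_take_drop w 1
          rw [hP1] at this
          omega
        have hw2pos : ∀ r, r ≤ n - 2 → 0 ≤ vsum ((w.drop 1).take r) := by
          intro r hr
          rcases Nat.eq_zero_or_pos r with rfl | hrpos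
          · simp
          · rw [hw2sum r]
            have := hpos (1 + r) (by omega) (by omega)
            omega
        -- first letter of w is 1
        have hfst : w = 1 :: w.drop 1 := by
          have hd := List.drop_eq_getElem_cons (l := w) (i := 0) (by omega)
          rw [List.drop_zero] at hd
          have hs := vsum_take_step w 0 (by omega)
          simp at hs
          rw [show vsum (w.take 1) = 1 from hP1] at hs
          have h01 : w[0]'(by omega) = 1 := (mval_eq_one_iff _).mp (by omega)
          simp only [h01] at hd
          exact hd
        obtain ⟨k₂, hk₂N, hQ₂, hgr₂⟩ :=
          exists_greatest_nat (Q := fun k => vsum ((w.drop 1).take k) = 0) (N := n - 2)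
            ⟨0, by omega, by simp⟩
        have hpos₂ : ∀ r, k₂ < r → r ≤ n - 2 → 1 ≤ vsum ((w.drop 1).take r) := by
          intro r h1 h2
          have := hgr₂ r h1 h2
          have := hw2pos r h2
          omega
        have hk₂n3 : k₂ ≤ n - 3 := by
          by_contra hc
          have hk₂eq : k₂ = n - 2 := by omega
          have h1 := hw2sum (n - 2)
          rw [show 1 + (n - 2) = n - 1 by omega] at h1
          rw [hk₂eq] at hQ₂
          omega
        have hT₂len : ((w.drop 1).drop k₂).length = n - 1 - k₂ := by
          rw [List.length_drop, hw2len]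
        have hT₂int : ∀ r, 0 < r → r < ((w.drop 1).drop k₂).length →
            1 ≤ vsum (((w.drop 1).drop k₂).take r) := by
          intro r hr0 hrl
          rw [vsum_drop_take, hQ₂]
          have := hpos₂ (k₂ + r) (by omega) (by omega)
          omega
        have hT₂v : vsum ((w.drop 1).drop k₂) = 0 := by
          have := vsum_take_drop (w.drop 1) k₂
          rw [hQ₂, hw2v] at this
          omega
        have helev₂ : (w.drop 1).drop k₂ ∈ ElevatedSet q ((w.drop 1).drop k₂).length := by
          apply mk_elevated hq (by omega)
          · intro a ha
            exact hwlt a (List.mem_of_mem_drop (List.mem_of_mem_drop ha))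
          · exact hT₂v
          · exact hT₂int
        by_cases hk₂B : k₂ ≤ n / 2 - 1
        · -- w ∈ SetB : contradiction
          exfalso
          apply hB
          have hαm : (w.drop 1).take k₂ ∈ MotzkinSet q k₂ := by
            have h := mk_motzkin (q := q) (w := (w.drop 1).take k₂)
              (fun a ha => hwlt a (List.mem_of_mem_drop (List.mem_of_mem_take ha)))
              (by intro r
                  rw [List.take_take]
                  exact hw2pos _ (by omega))
              hQ₂
            rwa [List.length_take, min_eq_left (by omega)] at h
          refine ⟨k₂, hk₂B, (w.drop 1).take k₂, hαm, (w.drop 1).drop k₂, ?_, ?_⟩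
          · have h := helev₂
            rwa [hT₂len, show n - 1 - k₂ = n - k₂ - 1 by omega] at h
          · rw [List.take_append_drop]
            exact hfst
        · -- short elevated suffix, C-word
          push_neg at hk₂B
          have hk₂half : n / 2 ≤ k₂ := by omega
          have hCm := shortElevC hq hn ((w.drop 1).drop k₂) ((w.drop 1).drop k₂).length helev₂
            (by omega) (by omega)
          refine ⟨_, setC_subset_CBFS hCm,
            Or.inr ⟨(w.drop 1).drop k₂, ⟨_, rfl⟩, ?_, ?_, ?_⟩⟩
          · apply List.ne_nil_of_length_pos; omega
          · simp only [List.length_append, List.length_replicate, List.length_cons,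
              List.length_nil]
            omega
          · rw [List.drop_drop]
            exact List.drop_suffix _ w
      · -- k₁ ≥ 1 : suffix with positive prefix sums, elevated completion in A
        have hTsums : ∀ r, 0 < r → r ≤ (w.drop k₁).length → 1 ≤ vsum ((w.drop k₁).take r) := by
          intro r hr0 hrl
          rw [vsum_drop_take, hQ₁]
          rw [List.length_drop, hwlen] at hrl
          by_cases hc : k₁ + r ≤ n - 1
          · have := hpos (k₁ + r) (by omega) hc
            omega
          · have hceq : k₁ + r = n := by omega
            rw [hceq, ← hwlen, List.take_length]
            omega
        have hTv : vsum (w.drop k₁) = 1 := by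
          have := vsum_take_drop w k₁
          rw [hQ₁] at this
          omega
        have hTa := elevA hq hn (w.drop k₁) (by rw [List.length_drop]; omega)
          (by rw [List.length_drop]; omega)
          (fun a ha => hwlt a (List.mem_of_mem_drop ha)) hTsums hTv
        refine ⟨_, setA_subset_CBFS hTa,
          Or.inr ⟨w.drop k₁, ⟨_, rfl⟩, ?_, ?_, List.drop_suffix k₁ w⟩⟩
        · apply List.ne_nil_of_length_pos; rw [List.length_drop]; omega
        · simp only [List.length_append, List.length_replicate, List.length_cons,
            List.length_nil]
          omega
    · -- V ≥ 2
      obtain ⟨k, hkN, hQk, hgrk⟩ :=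
        exists_greatest_nat (Q := fun k => vsum (w.take k) < vsum w) (N := n - 1)
          ⟨0, by omega, by simp; omega⟩
      have hPk1 : vsum w ≤ vsum (w.take (k + 1)) := by
        by_cases hc : k + 1 ≤ n - 1
        · have := hgrk (k + 1) (by omega) hc
          omega
        · have : k + 1 = n := by omega
          rw [this, ← hwlen, List.take_length]
      have hstep := vsum_take_le_succ w k
      have hPkeq : vsum (w.take k) = vsum w - 1 := by omega
      have hk1 : 1 ≤ k := by
        by_contra hc
        have : k = 0 := by omega
        rw [this] at hPkeq
        simp at hPkeq
        omega
      have hgrk' : ∀ j, k < j → j ≤ n → vsum w ≤ vsum (w.take j) := by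
        intro j h1 h2
        by_cases hc : j ≤ n - 1
        · have := hgrk j h1 hc; omega
        · have : j = n := by omega
          rw [this, ← hwlen, List.take_length]
      have hTsums : ∀ r, 0 < r → r ≤ (w.drop k).length → 1 ≤ vsum ((w.drop k).take r) := by
        intro r hr0 hrl
        rw [vsum_drop_take, hPkeq]
        rw [List.length_drop, hwlen] at hrl
        have := hgrk' (k + r) (by omega) (by omega)
        omega
      have hTv : vsum (w.drop k) = 1 := by
        have := vsum_take_drop w k
        omega
      have hTa := elevA hq hn (w.drop k) (by rw [List.length_drop]; omega)
        (by rw [List.length_drop]; omega)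
        (fun a ha => hwlt a (List.mem_of_mem_drop ha)) hTsums hTv
      refine ⟨_, setA_subset_CBFS hTa,
        Or.inr ⟨w.drop k, ⟨_, rfl⟩, ?_, ?_, List.drop_suffix k w⟩⟩
      · apply List.ne_nil_of_length_pos; rw [List.length_drop]; omega
      · simp only [List.length_append, List.length_replicate, List.length_cons,
          List.length_nil]
        omega
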